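/- Under the joint law of (X, Y₁, …, Y_K) described in the context, the select-max estimator is optimal for the one-sided error distortion: for every measurable function g : ℝ^K → ℝ with g(Y₁, …, Y_K) ≤ X almost surely (i.e., the one-sided distortion of g is almost surely finite), one has E[X − g(Y₁, …, Y_K)] ≥ E[X − Ŷ]. -/

import Mathlib

open MeasureTheory

/-- The one-sided exponential distribution `Exp(r)`, with density `r·e^{−r x}` on `x ≥ 0`. -/
noncomputable def expMeasure (r : ℝ) : Measure ℝ :=
  volume.withDensity fun x => if 0 ≤ x then ENNReal.ofReal (r * Real.exp (-r * x)) else 0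

/-- The forward test channel `κ(x)` of the one-sided exponential source: an atom of mass
`e^{−δx}` at `0` plus the density `y ↦ δ·e^{−δ(x−y)}` on the interval `(0, x]`. -/
noncomputable def expChannel (δ : ℝ) (x : ℝ) : Measure ℝ :=
  (ENNReal.ofReal (Real.exp (-δ * x))) • Measure.dirac 0 +
    volume.withDensity
      ((Set.Ioc (0 : ℝ) x).indicator fun y => ENNReal.ofReal (δ * Real.exp (-δ * (x - y))))

/-- The joint law of `(X, Y₁, …, Y_K)`: the composition of `Exp(λ)` (the law of `X`) with the
`K`-fold product kernel `x ↦ κ(x)^{⊗K}`, so that `Y₁, …, Y_K` are conditionally i.i.d. given `X`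
with conditional law `κ(X)`. -/
noncomputable def jointLaw (lam δ : ℝ) (K : ℕ) : Measure (ℝ × (Fin K → ℝ)) :=
  (expMeasure lam).bind fun x =>
    (Measure.pi fun _ : Fin K => expChannel δ x).map fun ys => (x, ys)

open Set ENNReal ProbabilityTheory

lemma expChannel_apply (δ x : ℝ) {s : Set ℝ} (hs : MeasurableSet s) :
    expChannel δ x s = ENNReal.ofReal (Real.exp (-δ * x)) * s.indicator 1 0 +
      ∫⁻ y in s, (Set.Ioc (0:ℝ) x).indicator
        (fun y => ENNReal.ofReal (δ * Real.exp (-δ * (x - y)))) y := by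
  simp [expChannel, Measure.dirac_apply' _ hs, withDensity_apply _ hs]

lemma expChannel_Iio_zero (δ x : ℝ) : expChannel δ x (Iio 0) = 0 := by
  rw [expChannel_apply δ x measurableSet_Iio]
  rw [Set.indicator_of_notMem (by simp)]
  rw [setLIntegral_congr_fun measurableSet_Iio
    (fun y hy => indicator_of_notMem (by
      simp at hy ⊢; intro h; linarith) _)]
  simp

lemma measurable_expChannel (δ : ℝ) : Measurable (expChannel δ) := by
  apply Measure.measurable_of_measurable_coe
  intro s hs
  simp only [fun x => expChannel_apply δ x hs]
  apply Measurable.add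
  · exact (Real.measurable_exp.comp (measurable_const.mul measurable_id)).ennreal_ofReal.mul
      measurable_const
  · have hjm : Measurable fun (p : ℝ × ℝ) => s.indicator (fun y =>
        (Set.Ioc (0:ℝ) p.1).indicator (fun y => ENNReal.ofReal (δ * Real.exp (-δ * (p.1 - y)))) y) p.2 := by
      have h1 : Measurable fun (p : ℝ × ℝ) => ENNReal.ofReal (δ * Real.exp (-δ * (p.1 - p.2))) := by
        fun_prop
      have h2 : MeasurableSet {p : ℝ × ℝ | p.2 ∈ Set.Ioc (0:ℝ) p.1} := by
        apply MeasurableSet.inter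
        · exact measurableSet_lt measurable_const measurable_snd
        · exact measurableSet_le measurable_snd measurable_fst
      have h3 : MeasurableSet {p : ℝ × ℝ | p.2 ∈ s} := measurable_snd hs
      have heq : (fun (p : ℝ × ℝ) => s.indicator (fun y =>
          (Set.Ioc (0:ℝ) p.1).indicator (fun y => ENNReal.ofReal (δ * Real.exp (-δ * (p.1 - y)))) y) p.2)
          = ({p : ℝ × ℝ | p.2 ∈ Set.Ioc (0:ℝ) p.1} ∩ {p | p.2 ∈ s}).indicator
            (fun p => ENNReal.ofReal (δ * Real.exp (-δ * (p.1 - p.2)))) := by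
        ext p
        simp only [Set.indicator, Set.mem_inter_iff, Set.mem_setOf_eq]
        by_cases h : p.2 ∈ s <;> by_cases h' : p.2 ∈ Set.Ioc (0:ℝ) p.1 <;>
          rw [Set.mem_Ioc] at h' <;> simp [h, h']
      rw [heq]
      exact h1.indicator (h2.inter h3)
    have hm := Measurable.lintegral_prod_right' (ν := volume) hjm
    have : (fun x : ℝ => ∫⁻ y in s, (Set.Ioc (0:ℝ) x).indicator
        (fun y => ENNReal.ofReal (δ * Real.exp (-δ * (x - y)))) y)
        = fun x : ℝ => ∫⁻ y, s.indicator (fun y =>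
        (Set.Ioc (0:ℝ) x).indicator (fun y => ENNReal.ofReal (δ * Real.exp (-δ * (x - y)))) y) y := by
      ext x
      exact (lintegral_indicator hs _).symm
    rw [this]
    exact hm


lemma expChannel_univ {δ x : ℝ} (hδ : 0 < δ) (hx : 0 ≤ x) : expChannel δ x Set.univ = 1 := by
  rw [expChannel_apply δ x MeasurableSet.univ]
  have h1 : (∫⁻ y in Set.univ, (Set.Ioc (0:ℝ) x).indicator
      (fun y => ENNReal.ofReal (δ * Real.exp (-δ * (x - y)))) y)
      = ∫⁻ y in Set.Ioc (0:ℝ) x, ENNReal.ofReal (δ * Real.exp (-δ * (x - y))) := by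
    rw [Measure.restrict_univ, lintegral_indicator measurableSet_Ioc]
  have hcont : Continuous fun y : ℝ => δ * Real.exp (-δ * (x - y)) := by fun_prop
  have h2 : (∫⁻ y in Set.Ioc (0:ℝ) x, ENNReal.ofReal (δ * Real.exp (-δ * (x - y))))
      = ENNReal.ofReal (∫ y in Set.Ioc (0:ℝ) x, δ * Real.exp (-δ * (x - y))) := by
    rw [← ofReal_integral_eq_lintegral_ofReal]
    · exact hcont.integrableOn_Ioc
    · exact Filter.Eventually.of_forall fun y => by positivity
  have h3 : (∫ y in Set.Ioc (0:ℝ) x, δ * Real.exp (-δ * (x - y)))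
      = 1 - Real.exp (-δ * x) := by
    rw [← intervalIntegral.integral_of_le hx]
    have : ∀ y ∈ Set.uIcc (0:ℝ) x, HasDerivAt (fun y : ℝ => Real.exp (-δ * (x - y)))
        (δ * Real.exp (-δ * (x - y))) y := by
      intro y _
      have hg : HasDerivAt (fun y : ℝ => -δ * (x - y)) δ y := by
        have := ((hasDerivAt_id y).const_mul δ).const_add (-δ * x)
        convert this using 1
        · rfl
        · rfl
        · ext z; simp; ring
        · ring
      have := hg.exp
      convert this using 1
      ring
    have := intervalIntegral.integral_eq_sub_of_hasDerivAt
      (fun y hy => this y hy) (by fun_prop : ContinuousOn _ _).intervalIntegrable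
    rw [this]
    simp
  rw [h1, h2, h3]
  have he1 : Real.exp (-δ * x) ≤ 1 := by
    rw [← Real.exp_zero]
    apply Real.exp_le_exp.mpr
    nlinarith
  rw [Set.indicator_of_mem (Set.mem_univ 0), Pi.one_apply, mul_one,
    ← ENNReal.ofReal_add (Real.exp_nonneg _) (by linarith)]
  · norm_num


lemma expChannel_restrict {δ q x x' : ℝ} (hq : 0 ≤ q) (hqx' : q ≤ x') (hx'x : x' ≤ x) :
    (expChannel δ x).restrict (Set.Iic q)
      = ENNReal.ofReal (Real.exp (-δ * (x - x'))) • (expChannel δ x').restrict (Set.Iic q) := by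
  set c : ℝ≥0∞ := ENNReal.ofReal (Real.exp (-δ * (x - x'))) with hc
  unfold expChannel
  rw [Measure.restrict_add, Measure.restrict_add, Measure.restrict_smul, Measure.restrict_smul,
    smul_add]
  classical
  rw [MeasureTheory.restrict_dirac' measurableSet_Iic, if_pos (by simpa using hq)]
  congr 1
  · rw [smul_smul, ← ENNReal.ofReal_mul (Real.exp_nonneg _), ← Real.exp_add]
    congr 2
    ring
  · rw [restrict_withDensity measurableSet_Iic, restrict_withDensity measurableSet_Iic,
      ← withDensity_smul' c _ ENNReal.ofReal_ne_top]
    apply withDensity_congr_ae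
    rw [Filter.EventuallyEq, ae_restrict_iff' measurableSet_Iic]
    apply Filter.Eventually.of_forall
    intro y hy
    simp only [Pi.smul_apply, smul_eq_mul]
    by_cases hy0 : 0 < y
    · rw [Set.indicator_of_mem (Set.mem_Ioc.mpr ⟨hy0, le_trans (le_trans hy hqx') hx'x⟩),
        Set.indicator_of_mem (Set.mem_Ioc.mpr ⟨hy0, le_trans hy hqx'⟩),
        ← ENNReal.ofReal_mul (Real.exp_nonneg _), ← mul_assoc, mul_comm (Real.exp _) δ,
        mul_assoc, ← Real.exp_add]
      congr 3
      ring
    · rw [Set.indicator_of_notMem (by simp [Set.mem_Ioc, hy0]),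
        Set.indicator_of_notMem (by simp [Set.mem_Ioc, hy0]), mul_zero]

lemma expChannel_isProb {δ x : ℝ} (hδ : 0 < δ) (hx : 0 ≤ x) :
    IsProbabilityMeasure (expChannel δ x) := ⟨expChannel_univ hδ hx⟩

lemma pi_expChannel_eq_of_subset {δ q x x' : ℝ} {K : ℕ} (hδ : 0 < δ) (hq : 0 ≤ q)
    (hqx' : q ≤ x') (hx'x : x' ≤ x) {S : Set (Fin K → ℝ)} (hS : MeasurableSet S)
    (hsub : S ⊆ Set.univ.pi fun _ => Set.Iic q) :
    Measure.pi (fun _ : Fin K => expChannel δ x) S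
      = ENNReal.ofReal (Real.exp (-δ * (x - x'))) ^ K
        * Measure.pi (fun _ : Fin K => expChannel δ x') S := by
  set c : ℝ≥0∞ := ENNReal.ofReal (Real.exp (-δ * (x - x'))) with hcdef
  haveI h1 : ∀ i : Fin K, IsProbabilityMeasure ((fun _ : Fin K => expChannel δ x) i) :=
    fun _ => expChannel_isProb hδ (le_trans hq (le_trans hqx' hx'x))
  haveI h2 : ∀ i : Fin K, IsProbabilityMeasure ((fun _ : Fin K => expChannel δ x') i) :=
    fun _ => expChannel_isProb hδ (le_trans hq hqx')
  haveI h1' : ∀ i : Fin K, SigmaFinite ((fun _ : Fin K => expChannel δ x) i) :=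
    fun i => haveI := h1 i; inferInstance
  haveI h2' : ∀ i : Fin K, SigmaFinite ((fun _ : Fin K => expChannel δ x') i) :=
    fun i => haveI := h2 i; inferInstance
  have hone : ∀ t : Set ℝ, MeasurableSet t →
      expChannel δ x (t ∩ Set.Iic q) = c * expChannel δ x' (t ∩ Set.Iic q) := by
    intro t ht
    have := expChannel_restrict (δ := δ) hq hqx' hx'x
    calc expChannel δ x (t ∩ Set.Iic q) = (expChannel δ x).restrict (Set.Iic q) t := by
          rw [Measure.restrict_apply ht]
      _ = (c • (expChannel δ x').restrict (Set.Iic q)) t := by rw [this]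
      _ = c * expChannel δ x' (t ∩ Set.Iic q) := by
          rw [Measure.smul_apply, smul_eq_mul, Measure.restrict_apply ht]
  set μ1 : Measure (Fin K → ℝ) :=
    (Measure.pi (fun _ : Fin K => expChannel δ x)).restrict (Set.univ.pi fun _ => Set.Iic q)
  set μ2 : Measure (Fin K → ℝ) :=
    c ^ K • (Measure.pi (fun _ : Fin K => expChannel δ x')).restrict
      (Set.univ.pi fun _ => Set.Iic q)
  have hpiIic : MeasurableSet (Set.univ.pi fun _ : Fin K => Set.Iic q) :=
    MeasurableSet.univ_pi fun _ => measurableSet_Iic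
  have hbox : ∀ t : Fin K → Set ℝ, (∀ i, MeasurableSet (t i)) →
      μ1 (Set.univ.pi t) = μ2 (Set.univ.pi t) := by
    intro t ht
    have hmt : MeasurableSet (Set.univ.pi t) := MeasurableSet.univ_pi ht
    rw [Measure.smul_apply, Measure.restrict_apply hmt, Measure.restrict_apply hmt,
      ← Set.pi_inter_distrib, Measure.pi_pi, Measure.pi_pi, smul_eq_mul]
    have : ∀ i : Fin K, expChannel δ x (t i ∩ Set.Iic q)
        = c * expChannel δ x' (t i ∩ Set.Iic q) := fun i => hone (t i) (ht i)
    rw [Finset.prod_congr rfl (fun i _ => this i), Finset.prod_mul_distrib,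
      Finset.prod_const]
    simp [Finset.card_univ]
  have hμeq : μ1 = μ2 := by
    haveI : IsFiniteMeasure μ1 := by
      constructor
      rw [Measure.restrict_apply MeasurableSet.univ, Set.univ_inter]
      exact measure_lt_top _ _
    haveI : IsFiniteMeasure μ2 := by
      constructor
      rw [Measure.smul_apply, smul_eq_mul]
      exact ENNReal.mul_lt_top (ENNReal.pow_ne_top ENNReal.ofReal_ne_top).lt_top
        (measure_lt_top _ _)
    apply MeasureTheory.ext_of_generate_finite
      (Set.pi Set.univ '' Set.pi Set.univ fun _ : Fin K => {s : Set ℝ | MeasurableSet s})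
      generateFrom_pi.symm isPiSystem_pi
    · rintro _ ⟨t, ht, rfl⟩
      exact hbox t fun i => ht i (Set.mem_univ i)
    · have := hbox (fun _ => Set.univ) (fun _ => MeasurableSet.univ)
      simpa using this
  calc Measure.pi (fun _ : Fin K => expChannel δ x) S
      = μ1 S := by
        rw [Measure.restrict_apply hS, Set.inter_eq_self_of_subset_left hsub]
    _ = μ2 S := by rw [hμeq]
    _ = c ^ K * Measure.pi (fun _ : Fin K => expChannel δ x') S := by
        rw [Measure.smul_apply, smul_eq_mul, Measure.restrict_apply hS,
          Set.inter_eq_self_of_subset_left hsub]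

lemma measurable_piChannel {δ : ℝ} (hδ : 0 < δ) (K : ℕ) :
    Measurable fun x : ℝ => Measure.pi (fun _ : Fin K => expChannel δ (max x 0)) := by
  haveI hprob : ∀ x : ℝ, ∀ i : Fin K,
      IsProbabilityMeasure ((fun _ : Fin K => expChannel δ (max x 0)) i) :=
    fun x _ => expChannel_isProb hδ (le_max_right x 0)
  haveI hsf : ∀ x : ℝ, ∀ i : Fin K,
      SigmaFinite ((fun _ : Fin K => expChannel δ (max x 0)) i) :=
    fun x i => haveI := hprob x i; inferInstance
  have hc : ∀ s : Set ℝ, MeasurableSet s →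
      Measurable fun x : ℝ => expChannel δ (max x 0) s := fun s hs =>
    (Measure.measurable_coe hs).comp
      ((measurable_expChannel δ).comp (measurable_id.max measurable_const))
  apply Measure.measurable_of_measurable_coe
  have key : ∀ t : Set (Fin K → ℝ), MeasurableSet t →
      Measurable fun x : ℝ => Measure.pi (fun _ : Fin K => expChannel δ (max x 0)) t := by
    refine fun t ht => MeasurableSpace.induction_on_inter
      (C := fun t _ => Measurable fun x : ℝ => Measure.pi (fun _ : Fin K => expChannel δ (max x 0)) t)
      (s := Set.pi Set.univ '' Set.pi Set.univ fun _ : Fin K => {s : Set ℝ | MeasurableSet s})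
      generateFrom_pi.symm isPiSystem_pi ?_ ?_ ?_ ?_ t ht
    · simp
    · rintro _ ⟨t, ht, rfl⟩
      have : (fun x : ℝ => Measure.pi (fun _ : Fin K => expChannel δ (max x 0)) (Set.univ.pi t))
          = fun x : ℝ => ∏ i : Fin K, expChannel δ (max x 0) (t i) := by
        ext x
        exact Measure.pi_pi _ _
      rw [this]
      exact Finset.measurable_prod _ fun i _ => hc (t i) (ht i (Set.mem_univ i))
    · intro t ht hmt
      have : (fun x : ℝ => Measure.pi (fun _ : Fin K => expChannel δ (max x 0)) tᶜ)
          = fun x : ℝ => 1 - Measure.pi (fun _ : Fin K => expChannel δ (max x 0)) t := by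
        ext x
        haveI : IsProbabilityMeasure (Measure.pi (fun _ : Fin K => expChannel δ (max x 0))) := by
          constructor
          rw [← Set.pi_univ Set.univ, Measure.pi_pi]
          simp [expChannel_univ hδ (le_max_right x 0)]
        rw [measure_compl ht (measure_ne_top _ _), measure_univ]
      rw [this]
      exact Measurable.const_sub hmt 1
    · intro f hdisj hmf hcf
      have : (fun x : ℝ => Measure.pi (fun _ : Fin K => expChannel δ (max x 0)) (⋃ i, f i))
          = fun x : ℝ => ∑' i, Measure.pi (fun _ : Fin K => expChannel δ (max x 0)) (f i) := by
        ext x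
        exact measure_iUnion hdisj hmf
      rw [this]
      exact Measurable.ennreal_tsum hcf
  exact key

open ProbabilityTheory

noncomputable def piChannel {δ : ℝ} (hδ : 0 < δ) (K : ℕ) : Kernel ℝ (Fin K → ℝ) :=
  ⟨fun x => Measure.pi fun _ : Fin K => expChannel δ (max x 0), measurable_piChannel hδ K⟩

lemma piChannel_apply {δ : ℝ} (hδ : 0 < δ) (K : ℕ) (x : ℝ) :
    piChannel hδ K x = Measure.pi fun _ : Fin K => expChannel δ (max x 0) := rfl

instance piChannel_isMarkov {δ : ℝ} (hδ : 0 < δ) (K : ℕ) : IsMarkovKernel (piChannel hδ K) := by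
  constructor
  intro x
  rw [piChannel_apply]
  haveI : ∀ i : Fin K, IsProbabilityMeasure ((fun _ : Fin K => expChannel δ (max x 0)) i) :=
    fun _ => expChannel_isProb hδ (le_max_right x 0)
  haveI : ∀ i : Fin K, SigmaFinite ((fun _ : Fin K => expChannel δ (max x 0)) i) :=
    fun i => haveI := this i; inferInstance
  constructor
  rw [← Set.pi_univ Set.univ, Measure.pi_pi]
  simp [expChannel_univ hδ (le_max_right x 0)]

lemma expMeasure_ae_nonneg (lam : ℝ) : ∀ᵐ x ∂(_root_.expMeasure lam), 0 ≤ x := by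
  rw [ae_iff]
  have h : {x : ℝ | ¬ 0 ≤ x} = Set.Iio 0 := by ext x; simp
  rw [h]
  unfold _root_.expMeasure
  rw [withDensity_apply _ measurableSet_Iio]
  rw [setLIntegral_congr_fun measurableSet_Iio
    (fun y hy => by
      simp only [Set.mem_Iio] at hy
      rw [if_neg (by linarith)])]
  simp

lemma jointLaw_apply {lam δ : ℝ} (hδ : 0 < δ) {K : ℕ} {s : Set (ℝ × (Fin K → ℝ))}
    (hs : MeasurableSet s) :
    jointLaw lam δ K s = ∫⁻ x, piChannel hδ K x (Prod.mk x ⁻¹' s) ∂(_root_.expMeasure lam) := by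
  have hmeas : Measurable fun x : ℝ => (piChannel hδ K x).map (Prod.mk x) := by
    have heq : (fun x : ℝ => (piChannel hδ K x).map (Prod.mk x))
        = fun x : ℝ => ((Kernel.deterministic (id : ℝ → ℝ) measurable_id) ×ₖ piChannel hδ K) x := by
      ext1 x
      rw [Kernel.prod_apply, Kernel.deterministic_apply, id_eq, Measure.dirac_prod]
    rw [heq]
    exact Kernel.measurable _
  have hbind : jointLaw lam δ K = (_root_.expMeasure lam).bind fun x => (piChannel hδ K x).map (Prod.mk x) := by
    unfold jointLaw Measure.bind
    congr 1
    apply Measure.map_congr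
    filter_upwards [expMeasure_ae_nonneg lam] with x hx
    rw [piChannel_apply, max_eq_left hx]
  rw [hbind, Measure.bind_apply hs hmeas.aemeasurable]
  apply lintegral_congr
  intro x
  rw [Measure.map_apply measurable_prodMk_left hs]

lemma jointLaw_ae_nonneg {lam δ : ℝ} (hδ : 0 < δ) (K : ℕ) :
    ∀ᵐ p ∂(jointLaw lam δ K), ∀ i, 0 ≤ p.2 i := by
  haveI := piChannel_isMarkov hδ K
  rw [ae_iff]
  have hset : {p : ℝ × (Fin K → ℝ) | ¬ ∀ i, 0 ≤ p.2 i}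
      = ⋃ i : Fin K, {p : ℝ × (Fin K → ℝ) | p.2 i < 0} := by
    ext p; simp [not_forall, not_le]
  rw [hset]
  apply measure_iUnion_null
  intro i
  have hmeas : MeasurableSet {p : ℝ × (Fin K → ℝ) | p.2 i < 0} :=
    measurableSet_lt (by fun_prop) measurable_const
  rw [jointLaw_apply hδ hmeas]
  have hz : ∀ x : ℝ, piChannel hδ K x {y : Fin K → ℝ | y i < 0} = 0 := by
    intro x
    haveI hprob : ∀ j : Fin K, IsProbabilityMeasure ((fun _ : Fin K => expChannel δ (max x 0)) j) :=
      fun _ => expChannel_isProb hδ (le_max_right x 0)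
    haveI : ∀ j : Fin K, SigmaFinite ((fun _ : Fin K => expChannel δ (max x 0)) j) :=
      fun j => haveI := hprob j; inferInstance
    have hpre : {y : Fin K → ℝ | y i < 0} = Function.eval i ⁻¹' (Set.Iio 0) := rfl
    rw [piChannel_apply, hpre]
    exact Measure.pi_eval_preimage_null _ (expChannel_Iio_zero δ (max x 0))
  have : ∀ x : ℝ, piChannel hδ K x (Prod.mk x ⁻¹' {p : ℝ × (Fin K → ℝ) | p.2 i < 0}) = 0 :=
    fun x => hz x
  rw [lintegral_congr this, lintegral_zero]

lemma expMeasure_null_volume {lam : ℝ} (hlam : 0 < lam) {s : Set ℝ} (hs : MeasurableSet s)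
    (h : _root_.expMeasure lam s = 0) : volume (s ∩ Set.Ioi 0) = 0 := by
  have h2 : _root_.expMeasure lam (s ∩ Set.Ioi 0) = 0 :=
    measure_mono_null Set.inter_subset_left h
  unfold _root_.expMeasure at h2
  rw [withDensity_apply _ (hs.inter measurableSet_Ioi)] at h2
  have hdm : Measurable fun x : ℝ => if 0 ≤ x then ENNReal.ofReal (lam * Real.exp (-lam * x)) else 0 := by
    apply Measurable.ite measurableSet_Ici <;> fun_prop
  rw [setLIntegral_eq_zero_iff (hs.inter measurableSet_Ioi) hdm] at h2
  rw [measure_eq_zero_iff_ae_notMem]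
  filter_upwards [h2] with x hx hmem
  have hx0 : (0:ℝ) < x := hmem.2
  have hz := hx hmem
  rw [if_pos hx0.le, ENNReal.ofReal_eq_zero] at hz
  nlinarith [mul_pos hlam (Real.exp_pos (-lam * x))]

lemma badSet_null {lam δ : ℝ} (hlam : 0 < lam) (hδ : 0 < δ) {K : ℕ}
    {g : (Fin K → ℝ) → ℝ} (hg : Measurable g)
    (hle : ∀ᵐ p ∂(jointLaw lam δ K), g p.2 ≤ p.1) (q q' : ℚ) :
    jointLaw lam δ K {p : ℝ × (Fin K → ℝ) | 0 ≤ (q:ℝ) ∧ (q:ℝ) < (q':ℝ) ∧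
      (∀ i, p.2 i ≤ (q:ℝ)) ∧ (q':ℝ) ≤ g p.2 ∧ g p.2 ≤ p.1} = 0 := by
  haveI := piChannel_isMarkov hδ K
  by_cases hqc : 0 ≤ (q:ℝ) ∧ (q:ℝ) < (q':ℝ)
  swap
  · have : {p : ℝ × (Fin K → ℝ) | 0 ≤ (q:ℝ) ∧ (q:ℝ) < (q':ℝ) ∧
        (∀ i, p.2 i ≤ (q:ℝ)) ∧ (q':ℝ) ≤ g p.2 ∧ g p.2 ≤ p.1} = ∅ := by
      ext p
      simp only [Set.mem_setOf_eq, Set.mem_empty_iff_false, iff_false]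
      intro hcon
      exact hqc ⟨hcon.1, hcon.2.1⟩
    rw [this]; exact measure_empty
  obtain ⟨hq0, hqq'⟩ := hqc
  -- the a.e. finiteness set of the distortion
  have hleset : MeasurableSet {p : ℝ × (Fin K → ℝ) | p.1 < g p.2} :=
    measurableSet_lt measurable_fst (hg.comp measurable_snd)
  have hle0 : jointLaw lam δ K {p : ℝ × (Fin K → ℝ) | p.1 < g p.2} = 0 := by
    rw [ae_iff] at hle
    have : {p : ℝ × (Fin K → ℝ) | ¬ g p.2 ≤ p.1} = {p | p.1 < g p.2} := by
      ext p; simp [not_le]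
    rwa [this] at hle
  set F : ℝ → ℝ≥0∞ := fun x => piChannel hδ K x (Prod.mk x ⁻¹' {p : ℝ × (Fin K → ℝ) | p.1 < g p.2})
    with hF
  have hFmeas : Measurable F := Kernel.measurable_kernel_prodMk_left hleset
  have hFae : ∀ᵐ x ∂(_root_.expMeasure lam), F x = 0 := by
    rw [jointLaw_apply hδ hleset] at hle0
    exact (lintegral_eq_zero_iff hFmeas).mp hle0
  have hNnull : _root_.expMeasure lam {x : ℝ | F x ≠ 0} = 0 := by
    rw [ae_iff] at hFae
    exact hFae
  have hvol : volume ({x : ℝ | F x ≠ 0} ∩ Set.Ioi 0) = 0 :=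
    expMeasure_null_volume hlam (hFmeas (measurableSet_singleton 0)).compl hNnull
  -- pick x' in (q, q') where F vanishes
  have hx'ex : ∃ x' : ℝ, x' ∈ Set.Ioo (q:ℝ) (q':ℝ) ∧ F x' = 0 := by
    by_contra hcon
    push_neg at hcon
    have hsub : Set.Ioo (q:ℝ) (q':ℝ) ⊆ {x : ℝ | F x ≠ 0} ∩ Set.Ioi 0 := by
      intro x hx
      refine ⟨hcon x hx, lt_of_le_of_lt hq0 hx.1⟩
    have := measure_mono_null hsub hvol
    rw [Real.volume_Ioo] at this
    rw [ENNReal.ofReal_eq_zero] at this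
    linarith
  obtain ⟨x', hx'mem, hFx'⟩ := hx'ex
  have hx'pos : (0:ℝ) < x' := lt_of_le_of_lt hq0 hx'mem.1
  -- the target set
  set S : Set (ℝ × (Fin K → ℝ)) := {p : ℝ × (Fin K → ℝ) | 0 ≤ (q:ℝ) ∧ (q:ℝ) < (q':ℝ) ∧
      (∀ i, p.2 i ≤ (q:ℝ)) ∧ (q':ℝ) ≤ g p.2 ∧ g p.2 ≤ p.1} with hSdef
  have h1 : MeasurableSet {p : ℝ × (Fin K → ℝ) | ∀ i, p.2 i ≤ (q:ℝ)} := by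
    have : {p : ℝ × (Fin K → ℝ) | ∀ i, p.2 i ≤ (q:ℝ)} = ⋂ i, {p : ℝ × (Fin K → ℝ) | p.2 i ≤ (q:ℝ)} := by
      ext p; simp
    rw [this]
    exact MeasurableSet.iInter fun i => measurableSet_le (by fun_prop) measurable_const
  have hSmeas : MeasurableSet S := by
    exact (MeasurableSet.const _).inter ((MeasurableSet.const _).inter (h1.inter
      ((measurableSet_le measurable_const (hg.comp measurable_snd)).inter
        (measurableSet_le (hg.comp measurable_snd) measurable_fst))))
  rw [jointLaw_apply hδ hSmeas]
  have hzero : ∀ x : ℝ, piChannel hδ K x (Prod.mk x ⁻¹' S) = 0 := by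
    intro x
    have hpre : Prod.mk x ⁻¹' S = {y : Fin K → ℝ | 0 ≤ (q:ℝ) ∧ (q:ℝ) < (q':ℝ) ∧
        (∀ i, y i ≤ (q:ℝ)) ∧ (q':ℝ) ≤ g y ∧ g y ≤ x} := rfl
    by_cases hx : (q':ℝ) ≤ x
    · have hxpos : (0:ℝ) < x := lt_of_lt_of_le hx'pos (le_trans hx'mem.2.le hx)
      have hmax : max x 0 = x := max_eq_left hxpos.le
      have hTmeas : MeasurableSet (Prod.mk x ⁻¹' S) := measurable_prodMk_left hSmeas
      have hsub : Prod.mk x ⁻¹' S ⊆ Set.univ.pi fun _ : Fin K => Set.Iic (q:ℝ) := by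
        intro y hy
        rw [hpre] at hy
        intro i _
        exact hy.2.2.1 i
      rw [piChannel_apply, hmax]
      rw [pi_expChannel_eq_of_subset hδ hq0 hx'mem.1.le (le_trans hx'mem.2.le hx) hTmeas hsub]
      have hsub2 : Prod.mk x ⁻¹' S ⊆ Prod.mk x' ⁻¹' {p : ℝ × (Fin K → ℝ) | p.1 < g p.2} := by
        intro y hy
        rw [hpre] at hy
        exact lt_of_lt_of_le hx'mem.2 hy.2.2.2.1
      have hpix' : Measure.pi (fun _ : Fin K => expChannel δ x')
          (Prod.mk x' ⁻¹' {p : ℝ × (Fin K → ℝ) | p.1 < g p.2}) = 0 := by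
        have h := hFx'
        rw [hF] at h
        simp only [piChannel_apply, max_eq_left hx'pos.le] at h
        exact h
      rw [measure_mono_null hsub2 hpix', mul_zero]
    · have : Prod.mk x ⁻¹' S = ∅ := by
        ext y
        rw [hpre]
        simp only [Set.mem_setOf_eq, Set.mem_empty_iff_false, iff_false]
        intro hcon
        exact hx (le_trans hcon.2.2.2.1 hcon.2.2.2.2)
      rw [this]
      exact measure_empty
  rw [lintegral_congr hzero, lintegral_zero]

/-- STATEMENT 6: under the joint law of `(X, Y₁, …, Y_K)`, the select-max estimator
`Ŷ = max{Y₁,…,Y_K}` is optimal for the one-sided error distortion: for every measurable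
`g : ℝ^K → ℝ` with `g(Y₁, …, Y_K) ≤ X` almost surely (i.e., the one-sided distortion of `g` is
almost surely finite), one has `E[X − g(Y₁, …, Y_K)] ≥ E[X − Ŷ]`. -/
theorem selectMax_optimal (lam D : ℝ) (hlam : 0 < lam) (hD : 0 < D)
    (hD' : D < 1 / lam) (K : ℕ) (hK : 1 ≤ K)
    (g : (Fin K → ℝ) → ℝ) (hg : Measurable g)
    (hle : ∀ᵐ p ∂(jointLaw lam (1 / D - lam) K), g p.2 ≤ p.1) :
    ∫⁻ p, ENNReal.ofReal (p.1 - ⨆ i, p.2 i) ∂(jointLaw lam (1 / D - lam) K)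
      ≤ ∫⁻ p, ENNReal.ofReal (p.1 - g p.2) ∂(jointLaw lam (1 / D - lam) K) := by
  set δ := 1 / D - lam with hδdef
  have hδ : 0 < δ := by
    have h1 : lam * D < 1 := by
      have h2 : lam * D < lam * (1 / lam) := by
        exact mul_lt_mul_of_pos_left hD' hlam
      rwa [mul_one_div_cancel (ne_of_gt hlam)] at h2
    have h3 : lam < 1 / D := (lt_div_iff₀ hD).mpr (by linarith [mul_comm lam D])
    simpa [hδdef] using sub_pos.mpr h3
  haveI := piChannel_isMarkov hδ K
  have hnn := jointLaw_ae_nonneg (lam := lam) hδ K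
  have hU : jointLaw lam δ K (⋃ (q : ℚ) (q' : ℚ),
      {p : ℝ × (Fin K → ℝ) | 0 ≤ (q:ℝ) ∧ (q:ℝ) < (q':ℝ) ∧
        (∀ i, p.2 i ≤ (q:ℝ)) ∧ (q':ℝ) ≤ g p.2 ∧ g p.2 ≤ p.1}) = 0 := by
    apply measure_iUnion_null
    intro q
    apply measure_iUnion_null
    intro q'
    exact badSet_null hlam hδ hg hle q q'
  apply lintegral_mono_ae
  filter_upwards [hle, hnn, measure_eq_zero_iff_ae_notMem.mp hU] with p h1 h2 h3
  apply ENNReal.ofReal_le_ofReal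
  apply sub_le_sub_left
  by_contra hc
  push_neg at hc
  haveI : Nonempty (Fin K) := ⟨⟨0, hK⟩⟩
  have hbdd : BddAbove (Set.range fun i => p.2 i) := (Set.finite_range _).bddAbove
  have hsup0 : 0 ≤ ⨆ i, p.2 i := le_trans (h2 ⟨0, hK⟩) (le_ciSup hbdd ⟨0, hK⟩)
  obtain ⟨q, hq1, hq2⟩ := exists_rat_btwn hc
  obtain ⟨q', hq'1, hq'2⟩ := exists_rat_btwn hq2
  apply h3
  refine Set.mem_iUnion.mpr ⟨q, Set.mem_iUnion.mpr ⟨q', ?_⟩⟩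
  exact ⟨le_trans hsup0 hq1.le, hq'1, fun i => le_trans (le_ciSup hbdd i) hq1.le, hq'2.le, h1⟩
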